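/- Let A be a nonnegative d×d matrix with associated directed graph. Then A has spectral radius strictly less than 1 if and only if for every vertex i₀ ∈ [d], the sum of walk weights over all walks from i₀ to i₀ is finite: ∑_{w ∈ W^{(i₀,i₀)}} |w| < ∞. -/

import Mathlib

open scoped ENNReal

/-- `k` (a sequence of `g+1` vertices) is a walk of length `g` in the directed graph
with edges `{(i,j) : 0 < A i j}`. -/
def IsWalk {d : ℕ} (A : Matrix (Fin d) (Fin d) ℝ) {g : ℕ} (k : Fin (g + 1) → Fin d) : Prop :=
  ∀ l : Fin g, 0 < A (k l.castSucc) (k l.succ)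

/-- The weight of a walk: the product of matrix entries along its edges. -/
def walkWeight {d : ℕ} (A : Matrix (Fin d) (Fin d) ℝ) {g : ℕ} (k : Fin (g + 1) → Fin d) : ℝ :=
  ∏ l : Fin g, A (k l.castSucc) (k l.succ)

/-- Total weight (in `[0,∞]`) of all walks (of all lengths `g ≥ 0`) from `i` to `j`. -/
noncomputable def walkSum {d : ℕ} (A : Matrix (Fin d) (Fin d) ℝ) (i j : Fin d) : ℝ≥0∞ :=
  ∑' w : {w : (g : ℕ) × (Fin (g + 1) → Fin d) //
      IsWalk A w.2 ∧ w.2 0 = i ∧ w.2 (Fin.last w.1) = j},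
    ENNReal.ofReal (walkWeight A w.1.2)

section Aux

open Module LinearMap Set

lemma walkWeight_cons {d : ℕ} (A : Matrix (Fin d) (Fin d) ℝ) {g : ℕ} (m : Fin d)
    (k : Fin (g + 1) → Fin d) :
    walkWeight A (Fin.cons m k) = A m (k 0) * walkWeight A k := by
  rw [walkWeight, Fin.prod_univ_succ]; congr 1

lemma pow_apply_eq_sum {d : ℕ} (A : Matrix (Fin d) (Fin d) ℝ) (n : ℕ) (i j : Fin d) :
    (A ^ n) i j = ∑ k : Fin (n + 1) → Fin d,
      if k 0 = i ∧ k (Fin.last n) = j then walkWeight A k else 0 := by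
  induction n generalizing i j with
  | zero =>
    have : (∑ k : Fin (0 + 1) → Fin d,
        if k 0 = i ∧ k (Fin.last 0) = j then walkWeight A k else 0)
        = ∑ m : Fin d, if m = i ∧ m = j then (1 : ℝ) else 0 :=
      Fintype.sum_equiv (Equiv.funUnique (Fin 1) (Fin d)) _ _
        (fun k => by simp [walkWeight, Fin.last, Equiv.funUnique])
    rw [this]
    by_cases h : i = j
    · subst h; simp [Matrix.one_apply]
    · simp only [pow_zero, Matrix.one_apply, if_neg h]
      exact (Finset.sum_eq_zero fun m _ => by
        have : ¬(m = i ∧ m = j) := fun ⟨h1, h2⟩ => h (h1 ▸ h2 ▸ rfl)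
        simp [this]).symm
  | succ n ih =>
    have key : ∀ F : (Fin (n + 2) → Fin d) → ℝ,
        ∑ k : Fin (n + 2) → Fin d, F k = ∑ m : Fin d, ∑ k : Fin (n + 1) → Fin d,
          F (Fin.cons m k) := by
      intro F
      calc ∑ k : Fin (n + 2) → Fin d, F k
          = ∑ p : Fin d × (Fin (n + 1) → Fin d), F (Fin.cons p.1 p.2) :=
            (Fintype.sum_equiv (Fin.consEquiv (fun _ : Fin (n + 2) => Fin d))
              (fun p => F (Fin.cons p.1 p.2)) F (fun p => rfl)).symm
        _ = _ := Fintype.sum_prod_type (f := fun p : Fin d × (Fin (n + 1) → Fin d) =>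
              F (Fin.cons p.1 p.2))
    rw [pow_succ', Matrix.mul_apply, key]
    have hterm : ∀ (m : Fin d) (k : Fin (n + 1) → Fin d),
        (if (Fin.cons m k : Fin (n + 2) → Fin d) 0 = i ∧
            (Fin.cons m k : Fin (n + 2) → Fin d) (Fin.last (n + 1)) = j
          then walkWeight A (Fin.cons m k) else 0)
        = if m = i ∧ k (Fin.last n) = j then A m (k 0) * walkWeight A k else 0 := by
      intro m k
      have hlast : (Fin.cons m k : Fin (n + 2) → Fin d) (Fin.last (n + 1)) = k (Fin.last n) := by
        rw [← Fin.succ_last, Fin.cons_succ]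
      rw [hlast, walkWeight_cons, Fin.cons_zero]
    simp only [hterm]
    have hswap : ∀ m : Fin d,
        (∑ k : Fin (n + 1) → Fin d, if m = i ∧ k (Fin.last n) = j
          then A m (k 0) * walkWeight A k else 0)
        = if m = i then ∑ k : Fin (n + 1) → Fin d,
            (if k (Fin.last n) = j then A m (k 0) * walkWeight A k else 0) else 0 := by
      intro m
      by_cases hm : m = i <;> simp [hm]
    simp only [hswap, Finset.sum_ite_eq', Finset.mem_univ, if_true]
    rw [Finset.sum_congr rfl (fun m _ => by rw [ih m j, Finset.mul_sum]), Finset.sum_comm]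
    apply Finset.sum_congr rfl
    intro k _
    by_cases hj : k (Fin.last n) = j
    · simp [hj]
    · simp [hj]

lemma walkWeight_nonneg {d : ℕ} {A : Matrix (Fin d) (Fin d) ℝ} (hA : ∀ i j, 0 ≤ A i j)
    {g : ℕ} (k : Fin (g + 1) → Fin d) : 0 ≤ walkWeight A k :=
  Finset.prod_nonneg fun _ _ => hA _ _

lemma walkWeight_eq_zero {d : ℕ} {A : Matrix (Fin d) (Fin d) ℝ} (hA : ∀ i j, 0 ≤ A i j)
    {g : ℕ} {k : Fin (g + 1) → Fin d} (h : ¬ IsWalk A k) : walkWeight A k = 0 := by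
  rw [IsWalk, not_forall] at h
  obtain ⟨l, hl⟩ := h
  exact Finset.prod_eq_zero (Finset.mem_univ l) (le_antisymm (not_lt.mp hl) (hA _ _)).symm.symm

lemma walkSum_eq_tsum_pow {d : ℕ} (A : Matrix (Fin d) (Fin d) ℝ) (hA : ∀ i j, 0 ≤ A i j)
    (i j : Fin d) :
    walkSum A i j = ∑' n : ℕ, ENNReal.ofReal ((A ^ n) i j) := by
  have h1 : walkSum A i j = ∑' w : (g : ℕ) × (Fin (g + 1) → Fin d),
      Set.indicator {w : (g : ℕ) × (Fin (g + 1) → Fin d) |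
        IsWalk A w.2 ∧ w.2 0 = i ∧ w.2 (Fin.last w.1) = j}
        (fun w => ENNReal.ofReal (walkWeight A w.2)) w :=
    by rw [walkSum]
       exact tsum_subtype {w : (g : ℕ) × (Fin (g + 1) → Fin d) |
           IsWalk A w.2 ∧ w.2 0 = i ∧ w.2 (Fin.last w.1) = j}
         (fun w => ENNReal.ofReal (walkWeight A w.2))
  rw [h1, ENNReal.tsum_sigma']
  congr 1
  funext n
  rw [tsum_fintype]
  rw [pow_apply_eq_sum, ENNReal.ofReal_sum_of_nonneg
    (fun k _ => by split <;> simp [walkWeight_nonneg hA])]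
  apply Finset.sum_congr rfl
  intro k _
  by_cases hw : IsWalk A k
  · by_cases he : k 0 = i ∧ k (Fin.last n) = j
    · have : (⟨n, k⟩ : (g : ℕ) × (Fin (g + 1) → Fin d)) ∈
        {w : (g : ℕ) × (Fin (g + 1) → Fin d) |
          IsWalk A w.2 ∧ w.2 0 = i ∧ w.2 (Fin.last w.1) = j} := ⟨hw, he.1, he.2⟩
      simp [Set.indicator_of_mem this, he]
    · have : (⟨n, k⟩ : (g : ℕ) × (Fin (g + 1) → Fin d)) ∉
        {w : (g : ℕ) × (Fin (g + 1) → Fin d) |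
          IsWalk A w.2 ∧ w.2 0 = i ∧ w.2 (Fin.last w.1) = j} := fun ⟨_, h1, h2⟩ => he ⟨h1, h2⟩
      simp [Set.indicator_of_notMem this, he]
  · have : (⟨n, k⟩ : (g : ℕ) × (Fin (g + 1) → Fin d)) ∉
      {w : (g : ℕ) × (Fin (g + 1) → Fin d) |
        IsWalk A w.2 ∧ w.2 0 = i ∧ w.2 (Fin.last w.1) = j} := fun ⟨h1, _⟩ => hw h1
    simp [Set.indicator_of_notMem this, walkWeight_eq_zero hA hw]

lemma trace_pow_formula {d : ℕ} (B : Matrix (Fin d) (Fin d) ℂ) :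
    ∃ (s : Finset ℂ) (m : ℂ → ℕ),
      (∀ μ, μ ∈ s ↔ μ ∈ spectrum ℂ B) ∧ (∀ μ ∈ s, 0 < m μ) ∧
      ∀ n : ℕ, (B ^ n).trace = ∑ μ ∈ s, (m μ : ℂ) * μ ^ n := by
  classical
  set V := Fin d → ℂ
  set f : Module.End ℂ V := Matrix.toLinAlgEquiv' B with hf
  set N : ℂ → Submodule ℂ V := fun μ => f.maxGenEigenspace μ with hN
  have hI := f.independent_maxGenEigenspace
  have hT := Module.End.iSup_maxGenEigenspace_eq_top f
  have hint : DirectSum.IsInternal N :=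
    DirectSum.isInternal_submodule_of_iSupIndep_of_iSup_eq_top hI hT
  have hfin : {μ | N μ ≠ ⊥}.Finite := WellFoundedGT.finite_ne_bot_of_iSupIndep hI
  refine ⟨hfin.toFinset, fun μ => finrank ℂ (N μ), ?_, ?_, ?_⟩
  · intro μ
    rw [Set.Finite.mem_toFinset, Set.mem_setOf_eq]
    have h1 : μ ∈ spectrum ℂ B ↔ μ ∈ spectrum ℂ f := by
      rw [hf, AlgEquiv.spectrum_eq Matrix.toLinAlgEquiv' B]
    rw [h1, ← Module.End.hasEigenvalue_iff_mem_spectrum]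
    constructor
    · intro h
      have h2 : N μ = f.genEigenspace μ (Module.End.maxUnifEigenspaceIndex f μ) :=
        f.maxGenEigenspace_eq μ
      rw [h2] at h
      exact Module.End.hasEigenvalue_of_hasGenEigenvalue (k := _) h
    · intro h
      have : f.eigenspace μ ≤ N μ := (f.genEigenspace μ).monotone le_top
      exact fun hbot => h (le_bot_iff.mp (hbot ▸ this))
  · intro μ hμ
    rw [Set.Finite.mem_toFinset, Set.mem_setOf_eq] at hμ
    have : Nontrivial (N μ) := Submodule.nontrivial_iff_ne_bot.mpr hμ
    exact Module.finrank_pos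
  · intro n
    -- trace of matrix = trace of linear map
    have htr : (B ^ n).trace = LinearMap.trace ℂ V (f ^ n) := by
      rw [hf, ← map_pow]
      rw [LinearMap.trace_eq_matrix_trace ℂ (Pi.basisFun ℂ (Fin d)),
        LinearMap.toMatrix_eq_toMatrix']
      congr 1
      have : (Matrix.toLinAlgEquiv' (B ^ n) : End ℂ V) = Matrix.toLin' (B ^ n) := rfl
      rw [this, LinearMap.toMatrix'_toLin']
    rw [htr]
    -- maps-to facts
    have hcomm : ∀ n : ℕ, Commute f (f ^ n) := fun n => (Commute.refl f).pow_right n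
    have hmaps : ∀ (n : ℕ) (μ : ℂ), MapsTo (f ^ n) (N μ) (N μ) := fun n μ =>
      Module.End.mapsTo_maxGenEigenspace_of_comm (hcomm n) μ
    rw [LinearMap.trace_eq_sum_trace_restrict' hint hfin (hmaps n)]
    apply Finset.sum_congr rfl
    intro μ hμ
    have hm1 : ∀ x ∈ N μ, f x ∈ N μ :=
      Module.End.mapsTo_maxGenEigenspace_of_comm (Commute.refl f) μ
    set g : Module.End ℂ (N μ) := f.restrict hm1 with hg
    have hres : (f ^ n).restrict (hmaps n μ) = g ^ n := (Module.End.pow_restrict n hm1).symm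
    rw [hres]
    set Nn : Module.End ℂ (N μ) := g - μ • 1 with hNn
    have hnil : IsNilpotent Nn := by
      have h0 := f.isNilpotent_restrict_maxGenEigenspace_sub_algebraMap μ
      have heq : (f - algebraMap ℂ (Module.End ℂ V) μ).restrict
          (Module.End.mapsTo_maxGenEigenspace_of_comm
            (Algebra.mul_sub_algebraMap_commutes f μ) μ) = Nn := by
        ext x
        simp [Nn, g, LinearMap.restrict_apply, Module.algebraMap_end_eq_smul_id]
      rwa [heq] at h0
    have hgdecomp : g = μ • 1 + Nn := by rw [hNn]; abel
    have hcomm2 : Commute (μ • (1 : Module.End ℂ (N μ))) Nn :=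
      (Commute.one_left Nn).smul_left μ
    rw [hgdecomp, hcomm2.add_pow]
    rw [map_sum]
    rw [Finset.sum_eq_single n]
    · simp only [Nat.sub_self, pow_zero, Nat.choose_self, Nat.cast_one, mul_one, smul_pow,
        one_pow, smul_mul_assoc, one_mul, map_smul, LinearMap.trace_one, smul_eq_mul]
      ring
    · intro k hk hkn
      have hj : 0 < n - k := by
        rw [Finset.mem_range] at hk
        omega
      have hnilj : IsNilpotent (Nn ^ (n - k)) := hnil.pow_of_pos hj.ne'
      have htrz : LinearMap.trace ℂ (N μ) (Nn ^ (n - k)) = 0 :=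
        (LinearMap.isNilpotent_trace_of_isNilpotent hnilj).eq_zero
      rw [smul_pow, one_pow, smul_mul_assoc, one_mul, LinearMap.trace_mul_comm,
        ← nsmul_eq_mul, map_nsmul, map_smul, htrz, smul_zero, smul_zero]
    · intro h
      exact absurd (Finset.self_mem_range_succ n) h

lemma norm_lt_one_of_summable_trace (s : Finset ℂ) (m : ℂ → ℕ) (hm : ∀ μ ∈ s, 0 < m μ)
    (t : ℕ → ℝ) (ht0 : ∀ n, 0 ≤ t n)
    (ht : ∀ n, ((t n : ℝ) : ℂ) = ∑ μ ∈ s, (m μ : ℂ) * μ ^ n)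
    (hsum : Summable t) : ∀ μ ∈ s, ‖μ‖ < 1 := by
  by_contra hcon
  push_neg at hcon
  obtain ⟨μb, hμbs, hμb⟩ := hcon
  obtain ⟨μ0, hμ0s, hμ0max⟩ := s.exists_max_image (fun μ => ‖μ‖) ⟨μb, hμbs⟩
  have hR : 1 ≤ ‖μ0‖ := le_trans hμb (hμ0max μb hμbs)
  have hμ0ne : μ0 ≠ 0 := fun h => by simp [h] at hR; linarith
  set M : ℝ := ∑' n, t n with hM
  have hM0 : 0 ≤ M := tsum_nonneg ht0
  set s' := s.erase μ0 with hs'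
  have hδpos : ∀ μ ∈ s', 0 < ‖1 - μ / μ0‖ := by
    intro μ hμ
    rw [norm_pos_iff, sub_ne_zero]
    intro h
    have : μ = μ0 := by rwa [eq_comm, div_eq_one_iff_eq hμ0ne] at h
    exact (Finset.ne_of_mem_erase hμ) this
  have hδ : ∃ δ : ℝ, 0 < δ ∧ ∀ μ ∈ s', δ ≤ ‖1 - μ / μ0‖ := by
    rcases s'.eq_empty_or_nonempty with h | h
    · exact ⟨1, one_pos, by simp [h]⟩
    · obtain ⟨μ1, hμ1, hmin⟩ := s'.exists_min_image (fun μ => ‖1 - μ / μ0‖) h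
      exact ⟨_, hδpos μ1 hμ1, hmin⟩
  obtain ⟨δ, hδ0, hδle⟩ := hδ
  set K : ℝ := ∑ μ ∈ s, (m μ : ℝ) with hK
  have hK0 : 0 ≤ K := Finset.sum_nonneg fun μ _ => by positivity
  set C : ℝ := K * (2 / δ) with hC
  have hC0 : 0 ≤ C := by positivity
  set ε : ℝ := min (δ / 2) (M + C + 2)⁻¹ with hε
  have hε0 : 0 < ε := lt_min (by positivity) (by positivity)
  have hε1 : ε ≤ δ / 2 := min_le_left _ _
  have hε2 : ε ≤ (M + C + 2)⁻¹ := min_le_right _ _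
  have hεlt1 : ε < 1 := lt_of_le_of_lt hε2 (by rw [inv_lt_one_iff₀]; right; linarith)
  set r : ℝ := 1 - ε with hr
  have hr0 : 0 ≤ r := by simp [hr]; linarith
  have hr1 : r < 1 := by simp [hr]; linarith
  set z : ℂ := (r : ℂ) / μ0 with hz
  have hnormz : ‖z‖ = r / ‖μ0‖ := by
    rw [hz, norm_div, Complex.norm_real, Real.norm_of_nonneg hr0]
  have hmuz : ∀ μ ∈ s, ‖μ * z‖ ≤ r := by
    intro μ hμ
    rw [norm_mul, hnormz, mul_div_assoc']
    rw [div_le_iff₀ (by linarith)]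
    calc ‖μ‖ * r ≤ ‖μ0‖ * r := by
          apply mul_le_mul_of_nonneg_right (hμ0max μ hμ) hr0
      _ = r * ‖μ0‖ := mul_comm _ _
  have hmuzlt : ∀ μ ∈ s, ‖μ * z‖ < 1 := fun μ hμ => lt_of_le_of_lt (hmuz μ hμ) hr1
  -- summability of the main series
  have hbound : ∀ n, ‖(t n : ℂ) * z ^ n‖ ≤ t n := by
    intro n
    rw [norm_mul, Complex.norm_real, Real.norm_of_nonneg (ht0 n), norm_pow]
    calc t n * ‖z‖ ^ n ≤ t n * 1 ^ n := by
          apply mul_le_mul_of_nonneg_left _ (ht0 n)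
          apply pow_le_pow_left₀ (norm_nonneg _)
          rw [hnormz]
          rw [div_le_one_iff]
          left
          exact ⟨by linarith, by linarith⟩
      _ = t n := by simp
  have hsummable : Summable (fun n => (t n : ℂ) * z ^ n) :=
    Summable.of_norm (hsum.of_nonneg_of_le (fun n => norm_nonneg _) hbound)
  set G : ℂ := ∑' n, (t n : ℂ) * z ^ n with hG
  have hG1 : ‖G‖ ≤ M := by
    calc ‖G‖ ≤ ∑' n, ‖(t n : ℂ) * z ^ n‖ := norm_tsum_le_tsum_norm hsummable.norm
      _ ≤ ∑' n, t n := Summable.tsum_le_tsum hbound hsummable.norm hsum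
  have hterm : ∀ n, (t n : ℂ) * z ^ n = ∑ μ ∈ s, (m μ : ℂ) * (μ * z) ^ n := by
    intro n
    rw [ht n, Finset.sum_mul]
    exact Finset.sum_congr rfl fun μ _ => by rw [mul_pow, mul_assoc]
  have hgeosum : ∀ μ ∈ s, Summable (fun n => (m μ : ℂ) * (μ * z) ^ n) := fun μ hμ =>
    (summable_geometric_of_norm_lt_one (hmuzlt μ hμ)).mul_left _
  have hG2 : G = ∑ μ ∈ s, (m μ : ℂ) * (1 - μ * z)⁻¹ := by
    rw [hG]
    calc ∑' n, (t n : ℂ) * z ^ n = ∑' n, ∑ μ ∈ s, (m μ : ℂ) * (μ * z) ^ n := by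
          exact tsum_congr hterm
      _ = ∑ μ ∈ s, ∑' n, (m μ : ℂ) * (μ * z) ^ n := Summable.tsum_finsetSum (fun μ hμ => hgeosum μ hμ)
      _ = ∑ μ ∈ s, (m μ : ℂ) * (1 - μ * z)⁻¹ := by
          apply Finset.sum_congr rfl
          intro μ hμ
          rw [tsum_mul_left, tsum_geometric_of_norm_lt_one (hmuzlt μ hμ)]
  have hμ0z : μ0 * z = (r : ℂ) := by
    rw [hz, mul_div_assoc']
    rw [mul_comm, mul_div_assoc, div_self hμ0ne, mul_one]
  -- split the sum
  have hsplit : G = (m μ0 : ℂ) * (1 - (r : ℂ))⁻¹ + ∑ μ ∈ s', (m μ : ℂ) * (1 - μ * z)⁻¹ := by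
    rw [hG2, ← hμ0z, ← Finset.add_sum_erase _ _ hμ0s]
  -- tail bound
  have htail : ‖∑ μ ∈ s', (m μ : ℂ) * (1 - μ * z)⁻¹‖ ≤ C := by
    calc ‖∑ μ ∈ s', (m μ : ℂ) * (1 - μ * z)⁻¹‖
        ≤ ∑ μ ∈ s', ‖(m μ : ℂ) * (1 - μ * z)⁻¹‖ := norm_sum_le _ _
      _ ≤ ∑ μ ∈ s', (m μ : ℝ) * (2 / δ) := by
          apply Finset.sum_le_sum
          intro μ hμ
          rw [norm_mul, norm_inv]
          have hnorm1 : δ / 2 ≤ ‖1 - μ * z‖ := by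
            have h1 : μ * z = (r : ℂ) * (μ / μ0) := by
              rw [hz]; field_simp
            have h2 : ‖(1 - μ / μ0) - (1 - μ * z)‖ ≤ ε := by
              rw [h1]
              have : (1 - μ / μ0) - (1 - (r : ℂ) * (μ / μ0)) = ((r : ℂ) - 1) * (μ / μ0) := by
                ring
              rw [this, norm_mul, norm_div]
              have hr' : ‖(r : ℂ) - 1‖ = ε := by
                rw [show (r : ℂ) - 1 = ((r - 1 : ℝ) : ℂ) by push_cast; ring]
                rw [Complex.norm_real, Real.norm_eq_abs, abs_of_nonpos (by linarith), hr]
                ring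
              rw [hr']
              calc ε * (‖μ‖ / ‖μ0‖) ≤ ε * 1 := by
                    apply mul_le_mul_of_nonneg_left _ hε0.le
                    rw [div_le_one_iff]
                    left
                    exact ⟨by linarith, hμ0max μ (Finset.mem_of_mem_erase hμ)⟩
                _ = ε := mul_one _
            have h3 : δ ≤ ‖1 - μ / μ0‖ := hδle μ hμ
            calc δ / 2 = δ - δ / 2 := by ring
              _ ≤ ‖1 - μ / μ0‖ - ε := by linarith
              _ ≤ ‖1 - μ / μ0‖ - ‖(1 - μ / μ0) - (1 - μ * z)‖ := by linarith
              _ ≤ ‖1 - μ * z‖ := by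
                  have := norm_sub_norm_le (1 - μ / μ0) (1 - μ * z)
                  linarith
          have hpos : (0 : ℝ) < ‖1 - μ * z‖ := lt_of_lt_of_le (by linarith) hnorm1
          have : ‖1 - μ * z‖⁻¹ ≤ 2 / δ := by
            rw [inv_le_iff_one_le_mul₀ hpos]
            rw [div_mul_eq_mul_div, le_div_iff₀ hδ0]
            calc 1 * δ = δ := one_mul δ
              _ = 2 * (δ / 2) := by ring
              _ ≤ 2 * ‖1 - μ * z‖ := by linarith
          calc ‖((m μ : ℕ) : ℂ)‖ * ‖1 - μ * z‖⁻¹ = (m μ : ℝ) * ‖1 - μ * z‖⁻¹ := by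
                norm_num
            _ ≤ (m μ : ℝ) * (2 / δ) := mul_le_mul_of_nonneg_left this (by positivity)
      _ ≤ ∑ μ ∈ s, (m μ : ℝ) * (2 / δ) := by
          apply Finset.sum_le_sum_of_subset_of_nonneg (Finset.erase_subset _ _)
          intro μ _ _
          positivity
      _ = C := by rw [hC, hK, Finset.sum_mul]
  -- head lower bound
  have hhead : M + C + 2 ≤ ‖(m μ0 : ℂ) * (1 - (r : ℂ))⁻¹‖ := by
    rw [norm_mul, norm_inv]
    have h1 : ‖(1 : ℂ) - (r : ℂ)‖ = ε := by
      rw [show (1 : ℂ) - (r : ℂ) = ((ε : ℝ) : ℂ) by rw [hr]; push_cast; ring]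
      rw [Complex.norm_real, Real.norm_of_nonneg hε0.le]
    rw [h1]
    have h2 : M + C + 2 ≤ ε⁻¹ := by
      have := (inv_le_inv₀ (by positivity) hε0).mpr hε2
      rwa [inv_inv] at this
    have h3 : (1 : ℝ) ≤ ‖((m μ0 : ℕ) : ℂ)‖ := by
      have := hm μ0 hμ0s
      simp only [Complex.norm_natCast]
      exact_mod_cast this
    calc M + C + 2 ≤ ε⁻¹ := h2
      _ = 1 * ε⁻¹ := (one_mul _).symm
      _ ≤ ‖((m μ0 : ℕ) : ℂ)‖ * ε⁻¹ := by
          apply mul_le_mul_of_nonneg_right h3 (by positivity)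
  -- contradiction
  have : M + 2 ≤ ‖G‖ := by
    rw [hsplit]
    have := norm_sub_norm_le ((m μ0 : ℂ) * (1 - (r : ℂ))⁻¹)
      (-(∑ μ ∈ s', (m μ : ℂ) * (1 - μ * z)⁻¹))
    rw [sub_neg_eq_add, norm_neg] at this
    linarith
  linarith


end Aux

lemma pow_entry_nonneg {d : ℕ} {A : Matrix (Fin d) (Fin d) ℝ} (hA : ∀ i j, 0 ≤ A i j) :
    ∀ (n : ℕ) (i j : Fin d), 0 ≤ (A ^ n) i j := by
  intro n
  induction n with
  | zero => intro i j; rw [pow_zero, Matrix.one_apply]; split <;> norm_num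
  | succ n ih =>
    intro i j
    rw [pow_succ, Matrix.mul_apply]
    exact Finset.sum_nonneg fun k _ => mul_nonneg (ih i k) (hA k j)

lemma trace_map_pow {d : ℕ} (A : Matrix (Fin d) (Fin d) ℝ) (n : ℕ) :
    (((A ^ n).trace : ℝ) : ℂ) = ((A.map (algebraMap ℝ ℂ)) ^ n).trace := by
  have h1 : A.map (algebraMap ℝ ℂ) = (algebraMap ℝ ℂ).mapMatrix A := rfl
  rw [h1, ← map_pow]
  have h2 := AddMonoidHom.map_trace (algebraMap ℝ ℂ) (A ^ n)
  rw [← Complex.coe_algebraMap, h2]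
  rfl

/-- Graph-theoretic subcriticality criterion: a nonnegative matrix `A` has spectral
radius strictly less than 1 iff for every vertex `i0` the total weight of walks from
`i0` back to `i0` is finite. -/
theorem spectral_radius_lt_one_iff_walkSums_finite
    (d : ℕ) (A : Matrix (Fin d) (Fin d) ℝ) (hA : ∀ i j, 0 ≤ A i j) :
    (∀ μ ∈ spectrum ℂ (A.map (algebraMap ℝ ℂ)), ‖μ‖ < 1) ↔
      ∀ i0 : Fin d, walkSum A i0 i0 ≠ ⊤ := by
  obtain ⟨s, m, hspec, hm, htr⟩ := trace_pow_formula (A.map (algebraMap ℝ ℂ))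
  set t : ℕ → ℝ := fun n => (A ^ n).trace with htdef
  have ht0 : ∀ n, 0 ≤ t n :=
    fun n => Finset.sum_nonneg fun i _ => pow_entry_nonneg hA n i i
  have htC : ∀ n, ((t n : ℝ) : ℂ) = ∑ μ ∈ s, (m μ : ℂ) * μ ^ n := fun n => by
    rw [htdef, trace_map_pow A n, htr n]
  have hdiag : ∀ (n : ℕ) (i : Fin d), (A ^ n) i i ≤ t n := fun n i =>
    Finset.single_le_sum (fun j (_ : j ∈ Finset.univ) => pow_entry_nonneg hA n j j)
      (Finset.mem_univ i)
  constructor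
  · intro hlt i0
    have hslt : ∀ μ ∈ s, ‖μ‖ < 1 := fun μ hμ => hlt μ ((hspec μ).mp hμ)
    set u : ℕ → ℝ := fun n => ∑ μ ∈ s, (m μ : ℝ) * ‖μ‖ ^ n with hu
    have husum : Summable u := summable_sum fun μ hμ =>
      ((summable_geometric_of_lt_one (norm_nonneg μ) (hslt μ hμ)).mul_left _)
    have hu0 : ∀ n, 0 ≤ u n := fun n => Finset.sum_nonneg fun μ _ => by positivity
    have htu : ∀ n, t n ≤ u n := by
      intro n
      have h1 : t n = (∑ μ ∈ s, (m μ : ℂ) * μ ^ n).re := by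
        rw [← htC n, Complex.ofReal_re]
      rw [h1]
      calc (∑ μ ∈ s, (m μ : ℂ) * μ ^ n).re ≤ ‖∑ μ ∈ s, (m μ : ℂ) * μ ^ n‖ := by
            exact Complex.re_le_norm _
        _ ≤ ∑ μ ∈ s, ‖(m μ : ℂ) * μ ^ n‖ := norm_sum_le _ _
        _ = u n := by
            apply Finset.sum_congr rfl
            intro μ _
            rw [norm_mul, norm_pow, Complex.norm_natCast]
    rw [walkSum_eq_tsum_pow A hA]
    have hle : (∑' n, ENNReal.ofReal ((A ^ n) i0 i0)) ≤ ∑' n, ENNReal.ofReal (u n) :=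
      Summable.tsum_le_tsum (fun n => ENNReal.ofReal_le_ofReal (le_trans (hdiag n i0) (htu n)))
        ENNReal.summable ENNReal.summable
    have : (∑' n, ENNReal.ofReal (u n)) ≠ ⊤ := by
      rw [← ENNReal.ofReal_tsum_of_nonneg hu0 husum]
      exact ENNReal.ofReal_ne_top
    exact ne_top_of_le_ne_top this hle
  · intro hfin μ hμspec
    have hμs : μ ∈ s := (hspec μ).mpr hμspec
    have h1 : ∀ i : Fin d, (∑' n, ENNReal.ofReal ((A ^ n) i i)) ≠ ⊤ := fun i => by
      rw [← walkSum_eq_tsum_pow A hA]; exact hfin i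
    have h2 : (∑' n, ENNReal.ofReal (t n)) ≠ ⊤ := by
      have heq : ∀ n, ENNReal.ofReal (t n) = ∑ i, ENNReal.ofReal ((A ^ n) i i) := fun n =>
        ENNReal.ofReal_sum_of_nonneg fun i _ => pow_entry_nonneg hA n i i
      rw [tsum_congr heq, Summable.tsum_finsetSum fun _ _ => ENNReal.summable]
      rw [ENNReal.sum_ne_top]
      exact fun i _ => h1 i
    have hsumt : Summable t := by
      have h3 := ENNReal.summable_toReal h2
      have h4 : (fun n => (ENNReal.ofReal (t n)).toReal) = t := by
        funext n; exact ENNReal.toReal_ofReal (ht0 n)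
      rwa [h4] at h3
    exact norm_lt_one_of_summable_trace s m hm t ht0 htC hsumt μ hμs
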